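/- In a rational step of the rational CG method, defining p_n = (𝒜+α_kI)⁻¹(ρ_n p_{n−1} + r_{n−1}) with ρ_n = α_k⟨(𝒜+α_kI)⁻¹p_{n−1}, r_{n−1}⟩ / ⟨𝒜p_{n−1}, (𝒜+α_kI)⁻¹p_{n−1}⟩, and assuming ⟨r_{n−1}, p_{n−1}⟩ = 0, one has ⟨𝒜p_n, p_{n−1}⟩ = 0; moreover ρ_n also equals −⟨𝒜p_{n−1}, (𝒜+α_kI)⁻¹r_{n−1}⟩ / ⟨𝒜p_{n−1}, (𝒜+α_kI)⁻¹p_{n−1}⟩. -/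

import Mathlib

/-- In a rational step of the rational CG method, with
s = (𝒜+α_kI)⁻¹p_{n−1}, t = (𝒜+α_kI)⁻¹r_{n−1},
ρ = α_k⟨s, r_{n−1}⟩/⟨𝒜p_{n−1}, s⟩ and p_n = (𝒜+α_kI)⁻¹(ρp_{n−1} + r_{n−1}) = ρs + t,
assuming ⟨r_{n−1}, p_{n−1}⟩ = 0 one has ⟨𝒜p_n, p_{n−1}⟩ = 0; moreover
ρ = −⟨𝒜p_{n−1}, t⟩/⟨𝒜p_{n−1}, s⟩. -/
theorem stmt_17 {X : Type*} [NormedAddCommGroup X] [InnerProductSpace ℝ X]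
    [FiniteDimensional ℝ X]
    (𝒜 : Module.End ℝ X) (hsym : ∀ x y : X, (inner ℝ (𝒜 x) y : ℝ) = inner ℝ x (𝒜 y))
    (hpsd : ∀ x : X, 0 ≤ (inner ℝ (𝒜 x) x : ℝ))
    (αk : ℝ) (hαk : 0 < αk)
    (hbij : Function.Bijective (𝒜 + αk • (1 : Module.End ℝ X)))
    (pPrev rPrev s t : X)
    (hs : (𝒜 + αk • (1 : Module.End ℝ X)) s = pPrev)
    (ht : (𝒜 + αk • (1 : Module.End ℝ X)) t = rPrev)
    (horth : (inner ℝ rPrev pPrev : ℝ) = 0)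
    (hden : (inner ℝ (𝒜 pPrev) s : ℝ) ≠ 0)
    (ρ : ℝ) (hρ : ρ = αk * (inner ℝ s rPrev : ℝ) / (inner ℝ (𝒜 pPrev) s : ℝ))
    (pn : X) (hpn : pn = ρ • s + t) :
    (inner ℝ (𝒜 pn) pPrev : ℝ) = 0 ∧
    ρ = -(inner ℝ (𝒜 pPrev) t : ℝ) / (inner ℝ (𝒜 pPrev) s : ℝ) := by
  have hAs : 𝒜 s = pPrev - αk • s := by
    have := hs
    simp [LinearMap.add_apply, LinearMap.smul_apply] at this
    rw [← this]; abel
  have hAt : 𝒜 t = rPrev - αk • t := by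
    have := ht
    simp [LinearMap.add_apply, LinearMap.smul_apply] at this
    rw [← this]; abel
  -- ⟨s, rPrev⟩ = ⟨pPrev, t⟩
  have hkey : (inner ℝ s rPrev : ℝ) = inner ℝ pPrev t := by
    calc (inner ℝ s rPrev : ℝ) = inner ℝ s (𝒜 t + αk • t) := by
          rw [← ht]; simp [LinearMap.add_apply, LinearMap.smul_apply]
      _ = inner ℝ (𝒜 s) t + αk * inner ℝ s t := by
          rw [inner_add_right, real_inner_smul_right, ← hsym s t]
      _ = inner ℝ (𝒜 s + αk • s) t := by
          rw [inner_add_left, real_inner_smul_left]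
      _ = inner ℝ pPrev t := by rw [hAs]; congr 1; abel
  have hT : (inner ℝ (𝒜 pPrev) t : ℝ) = -(αk * inner ℝ s rPrev) := by
    rw [hsym pPrev t, hAt, inner_sub_right, real_inner_smul_right,
      real_inner_comm rPrev pPrev, horth, hkey]
    ring
  have hρ2 : ρ = -(inner ℝ (𝒜 pPrev) t : ℝ) / (inner ℝ (𝒜 pPrev) s : ℝ) := by
    rw [hρ, hT]; ring
  refine ⟨?_, hρ2⟩
  have : (inner ℝ (𝒜 pn) pPrev : ℝ)
      = ρ * inner ℝ (𝒜 pPrev) s + inner ℝ (𝒜 pPrev) t := by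
    rw [hpn, map_add, map_smul, inner_add_left, real_inner_smul_left,
      hsym s pPrev, hsym t pPrev, real_inner_comm (𝒜 pPrev) s,
      real_inner_comm (𝒜 pPrev) t]
  rw [this, hρ2, hT]
  field_simp
  ring
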